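/- For every integer n ≥ 2 and every finite symmetric generating set Σ of the free abelian group ℤⁿ (with Σ = −Σ and 0 ∉ Σ), the metric space (ℤⁿ, d_Σ), where d_Σ is the word metric associated to Σ, has roundness exactly 1. In other words, the roundness spectrum of ℤⁿ is {1}. -/

import Mathlib

/-- The set of exponents `q ≥ 1` for which the roundness inequality holds for all
quadruples of points, with respect to the distance function `d`. -/
noncomputable def roundnessSet {X : Type*} (d : X → X → ℝ) : Set ℝ :=
  {q : ℝ | 1 ≤ q ∧ ∀ x00 x01 x10 x11 : X,
    d x00 x11 ^ q + d x01 x10 ^ q ≤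
      d x00 x01 ^ q + d x00 x10 ^ q + d x11 x01 ^ q + d x11 x10 ^ q}

/-- The roundness of a distance function `d` on `X`: the supremum (in `EReal`) of all
exponents `q ≥ 1` for which the roundness inequality holds for all quadruples. -/
noncomputable def roundness {X : Type*} (d : X → X → ℝ) : EReal :=
  sSup ((fun q : ℝ => (q : EReal)) '' roundnessSet d)
/-- The word length of `g` in an additive group with respect to a generating set `S`:
the least `n` such that `g` is a sum of `n` elements of `S`. -/
noncomputable def addWordLength {G : Type*} [AddGroup G] (S : Set G) (g : G) : ℕ :=
  sInf {n : ℕ | ∃ l : List G, l.length = n ∧ (∀ x ∈ l, x ∈ S) ∧ l.sum = g}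

/-- The word metric on an additive group `G` associated to a generating set `S`. -/
noncomputable def addWordDist {G : Type*} [AddGroup G] (S : Set G) (g h : G) : ℝ :=
  addWordLength S (-g + h)

section AuxWL


variable {G : Type*} [AddCommGroup G] {S : Set G}

lemma aux_sum_map_neg (l : List G) : (l.map (fun x => -x)).sum = -l.sum := by
  induction l with
  | nil => simp
  | cons x t ih => simp [ih]; abel

lemma aux_rep_exists (hsym : ∀ v ∈ S, -v ∈ S) (hgen : AddSubgroup.closure S = ⊤) (v : G) :
    ∃ l : List G, (∀ x ∈ l, x ∈ S) ∧ l.sum = v := by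
  have hv : v ∈ AddSubgroup.closure S := by rw [hgen]; trivial
  induction hv using AddSubgroup.closure_induction with
  | mem x hx => exact ⟨[x], by simpa using hx, by simp⟩
  | zero => exact ⟨[], by simp, by simp⟩
  | add x y _ _ ihx ihy =>
      obtain ⟨lx, hlx, hsx⟩ := ihx
      obtain ⟨ly, hly, hsy⟩ := ihy
      refine ⟨lx ++ ly, ?_, by simp [hsx, hsy]⟩
      intro z hz
      rcases List.mem_append.1 hz with h | h
      · exact hlx z h
      · exact hly z h
  | neg x _ ihx =>
      obtain ⟨lx, hlx, hsx⟩ := ihx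
      refine ⟨lx.map (fun x => -x), ?_, by rw [aux_sum_map_neg, hsx]⟩
      intro z hz
      obtain ⟨w, hw, rfl⟩ := List.mem_map.1 hz
      exact hsym w (hlx w hw)

lemma aux_set_nonempty (hsym : ∀ v ∈ S, -v ∈ S) (hgen : AddSubgroup.closure S = ⊤) (v : G) :
    {n : ℕ | ∃ l : List G, l.length = n ∧ (∀ x ∈ l, x ∈ S) ∧ l.sum = v}.Nonempty := by
  obtain ⟨l, hl, hs⟩ := aux_rep_exists hsym hgen v
  exact ⟨l.length, l, rfl, hl, hs⟩

lemma aux_wl_le (v : G) (l : List G) (hl : ∀ x ∈ l, x ∈ S) (hs : l.sum = v) :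
    addWordLength S v ≤ l.length :=
  Nat.sInf_le ⟨l, rfl, hl, hs⟩

lemma aux_wl_spec (hsym : ∀ v ∈ S, -v ∈ S) (hgen : AddSubgroup.closure S = ⊤) (v : G) :
    ∃ l : List G, l.length = addWordLength S v ∧ (∀ x ∈ l, x ∈ S) ∧ l.sum = v :=
  Nat.sInf_mem (aux_set_nonempty hsym hgen v)

lemma aux_wl_add_le (hsym : ∀ v ∈ S, -v ∈ S) (hgen : AddSubgroup.closure S = ⊤) (u v : G) :
    addWordLength S (u + v) ≤ addWordLength S u + addWordLength S v := by
  obtain ⟨lu, hlen, hmem, hsum⟩ := aux_wl_spec hsym hgen u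
  obtain ⟨lv, hlen', hmem', hsum'⟩ := aux_wl_spec hsym hgen v
  have := aux_wl_le (S := S) (u + v) (lu ++ lv)
    (by intro z hz; rcases List.mem_append.1 hz with h | h
        exacts [hmem z h, hmem' z h])
    (by simp [hsum, hsum'])
  simpa [hlen, hlen'] using this

lemma aux_wl_neg_le (hsym : ∀ v ∈ S, -v ∈ S) (hgen : AddSubgroup.closure S = ⊤) (v : G) :
    addWordLength S (-v) ≤ addWordLength S v := by
  obtain ⟨l, hlen, hmem, hsum⟩ := aux_wl_spec hsym hgen v
  have := aux_wl_le (S := S) (-v) (l.map (fun x => -x))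
    (by intro z hz; obtain ⟨w, hw, rfl⟩ := List.mem_map.1 hz; exact hsym w (hmem w hw))
    (by rw [aux_sum_map_neg, hsum])
  simpa [hlen] using this

lemma aux_wl_neg (hsym : ∀ v ∈ S, -v ∈ S) (hgen : AddSubgroup.closure S = ⊤) (v : G) :
    addWordLength S (-v) = addWordLength S v := by
  refine le_antisymm (aux_wl_neg_le hsym hgen v) ?_
  have := aux_wl_neg_le hsym hgen (-v)
  simpa using this

lemma aux_wl_pos (hsym : ∀ v ∈ S, -v ∈ S) (hgen : AddSubgroup.closure S = ⊤) (v : G)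
    (hv : v ≠ 0) : 1 ≤ addWordLength S v := by
  by_contra h
  push_neg at h
  interval_cases h' : addWordLength S v
  obtain ⟨l, hlen, _, hsum⟩ := aux_wl_spec hsym hgen v
  rw [h'] at hlen
  rw [List.length_eq_zero_iff] at hlen
  subst hlen
  simp at hsum
  exact hv hsum.symm

lemma aux_phi_le (hsym : ∀ v ∈ S, -v ∈ S) (hgen : AddSubgroup.closure S = ⊤)
    (φ : G → ℝ) (hadd : ∀ x y, φ (x + y) = φ x + φ y) (hφ : ∀ s ∈ S, φ s ≤ 1) (v : G) :
    φ v ≤ (addWordLength S v : ℝ) := by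
  have h0 : φ 0 = 0 := by
    have := hadd 0 0; simp at this; linarith
  have key : ∀ l : List G, (∀ x ∈ l, x ∈ S) → φ l.sum ≤ (l.length : ℝ) := by
    intro l
    induction l with
    | nil => intro _; simp [h0]
    | cons x t ih =>
        intro hmem
        have hx : φ x ≤ 1 := hφ x (hmem x (by simp))
        have ht := ih (by intro z hz; exact hmem z (by simp [hz]))
        rw [List.sum_cons, hadd]
        simp only [List.length_cons]
        push_cast
        linarith
  obtain ⟨l, hlen, hmem, hsum⟩ := aux_wl_spec hsym hgen v
  have := key l hmem
  rw [hsum, hlen] at this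
  exact this

end AuxWL

section Dot

variable {n : ℕ}

def dotZ (x y : Fin n → ℤ) : ℤ := ∑ i, x i * y i

lemma dotZ_comm (x y : Fin n → ℤ) : dotZ x y = dotZ y x := by
  unfold dotZ; exact Finset.sum_congr rfl (fun i _ => mul_comm _ _)

lemma dotZ_add_right (x y z : Fin n → ℤ) : dotZ x (y + z) = dotZ x y + dotZ x z := by
  unfold dotZ
  rw [← Finset.sum_add_distrib]
  exact Finset.sum_congr rfl (fun i _ => by simp [mul_add])

lemma dotZ_neg_right (x y : Fin n → ℤ) : dotZ x (-y) = -dotZ x y := by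
  unfold dotZ
  rw [← Finset.sum_neg_distrib]
  exact Finset.sum_congr rfl (fun i _ => by simp)

lemma dotZ_zsmul_right (x y : Fin n → ℤ) (c : ℤ) : dotZ x (c • y) = c * dotZ x y := by
  unfold dotZ
  rw [Finset.mul_sum]
  exact Finset.sum_congr rfl (fun i _ => by simp [smul_eq_mul]; ring)

lemma dotZ_nsmul_right (x y : Fin n → ℤ) (k : ℕ) : dotZ x (k • y) = (k : ℤ) * dotZ x y := by
  have : (k : ℤ) • y = k • y := by simp
  rw [← this, dotZ_zsmul_right]

lemma dotZ_zero_right (x : Fin n → ℤ) : dotZ x (0 : Fin n → ℤ) = 0 := by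
  unfold dotZ
  exact Finset.sum_eq_zero (fun i _ => by simp)

lemma dotZ_nonneg (x : Fin n → ℤ) : 0 ≤ dotZ x x :=
  Finset.sum_nonneg (fun i _ => mul_self_nonneg _)

lemma dotZ_self_eq_zero {x : Fin n → ℤ} (h : dotZ x x = 0) : x = 0 := by
  funext i
  have := (Finset.sum_eq_zero_iff_of_nonneg (fun j _ => mul_self_nonneg (x j))).1 h i
    (Finset.mem_univ i)
  simpa [mul_self_eq_zero] using this

lemma dotZ_self_pos {x : Fin n → ℤ} (h : x ≠ 0) : 0 < dotZ x x := by
  rcases lt_or_eq_of_le (dotZ_nonneg x) with h' | h'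
  · exact h'
  · exact absurd (dotZ_self_eq_zero h'.symm) h

lemma dotZ_sub_self (x y : Fin n → ℤ) :
    dotZ (x - y) (x - y) = dotZ x x - 2 * dotZ x y + dotZ y y := by
  unfold dotZ
  have h1 : ∑ i, (x - y) i * (x - y) i
      = ∑ i, (x i * x i - 2 * (x i * y i) + y i * y i) :=
    Finset.sum_congr rfl (fun i _ => by simp [Pi.sub_apply]; ring)
  rw [h1, Finset.sum_add_distrib, Finset.sum_sub_distrib, ← Finset.mul_sum]

lemma dotZ_comb_left (c d : ℤ) (x y z : Fin n → ℤ) :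
    dotZ (c • x + d • y) z = c * dotZ x z + d * dotZ y z := by
  rw [dotZ_comm, dotZ_add_right, dotZ_zsmul_right, dotZ_zsmul_right,
    dotZ_comm z x, dotZ_comm z y]

end Dot

/-- Construction of the two supporting functionals. -/
lemma exists_functionals (n : ℕ) (hn : 2 ≤ n) (S : Set (Fin n → ℤ))
    (hfin : S.Finite) (hsym : ∀ v ∈ S, -v ∈ S) (h0 : (0 : Fin n → ℤ) ∉ S)
    (hgen : AddSubgroup.closure S = ⊤) :
    ∃ (a b : Fin n → ℤ) (f g : (Fin n → ℤ) → ℝ) (δ : ℝ),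
      a ∈ S ∧ b ∈ S ∧
      (∀ x y, f (x + y) = f x + f y) ∧ (∀ x y, g (x + y) = g x + g y) ∧
      (∀ s ∈ S, f s ≤ 1) ∧ (∀ s ∈ S, g s ≤ 1) ∧
      f a = 1 ∧ f b = 1 ∧ g a = 1 ∧ g b = 1 - δ ∧ 0 < δ ∧ δ ≤ 2 := by
  classical
  -- S is nonempty
  have hSne : S.Nonempty := by
    rcases S.eq_empty_or_nonempty with h | h
    · exfalso
      rw [h] at hgen
      have hmem' : (fun _ => 1 : Fin n → ℤ) ∈ AddSubgroup.closure (∅ : Set (Fin n → ℤ)) := by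
        rw [hgen]; trivial
      rw [AddSubgroup.closure_empty] at hmem'
      have h1 : (fun _ => 1 : Fin n → ℤ) = 0 := hmem'
      have := congrFun h1 ⟨0, by omega⟩
      simp at this
    · exact h
  -- pick a ∈ S maximizing dotZ s s
  obtain ⟨a, haF, hamax⟩ := Finset.exists_max_image hfin.toFinset (fun s => dotZ s s)
    (by rwa [Set.Finite.toFinset_nonempty])
  rw [Set.Finite.mem_toFinset] at haF
  have hamax' : ∀ s ∈ S, dotZ s s ≤ dotZ a a := by
    intro s hs; exact hamax s (hfin.mem_toFinset.2 hs)
  set A : ℤ := dotZ a a with hA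
  have ha0 : a ≠ 0 := fun h => h0 (h ▸ haF)
  have hApos : 0 < A := dotZ_self_pos ha0
  -- strict bound for s ≠ a
  have hstrict : ∀ s ∈ S, s ≠ a → dotZ a s < A := by
    intro s hs hne
    have hsub : (0:ℤ) < dotZ (s - a) (s - a) := dotZ_self_pos (sub_ne_zero.2 hne)
    have hexp : dotZ (s - a) (s - a) = dotZ s s - 2 * dotZ a s + A := by
      rw [dotZ_sub_self, dotZ_comm s a]
    have hss := hamax' s hs
    rw [hexp] at hsub
    omega
  have hle : ∀ s ∈ S, dotZ a s ≤ A := by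
    intro s hs
    rcases eq_or_ne s a with rfl | hne
    · rw [hA]
    · exact (hstrict s hs hne).le
  have hgelb : ∀ s ∈ S, -A ≤ dotZ a s := by
    intro s hs
    have := hle (-s) (hsym s hs)
    rw [dotZ_neg_right] at this
    omega
  -- find b₀ not proportional to a
  have hb0 : ∃ b₀ ∈ S, A * dotZ b₀ b₀ ≠ (dotZ a b₀) ^ 2 := by
    by_contra h
    push_neg at h
    set M : AddSubgroup (Fin n → ℤ) :=
      { carrier := {x | A • x = dotZ a x • a}
        zero_mem' := by
          show A • (0 : Fin n → ℤ) = dotZ a 0 • a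
          rw [smul_zero, dotZ_zero_right, zero_smul]
        add_mem' := by
          intro x y hx hy
          simp only [Set.mem_setOf_eq] at *
          rw [smul_add, hx, hy, dotZ_add_right, add_smul]
        neg_mem' := by
          intro x hx
          simp only [Set.mem_setOf_eq] at *
          rw [smul_neg, hx, dotZ_neg_right, neg_smul] } with hM
    have hSM : S ⊆ M := by
      intro s hs
      have heq : A * dotZ s s = (dotZ a s) ^ 2 := h s hs
      -- w := A • s - (dotZ a s) • a has dotZ w w = 0
      have hw : dotZ (A • s + (-(dotZ a s)) • a) (A • s + (-(dotZ a s)) • a) = 0 := by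
        set w := A • s + (-(dotZ a s)) • a with hwdef
        rw [hwdef, dotZ_comb_left]
        have h1 : dotZ s w = A * dotZ s s - dotZ a s * dotZ s a := by
          rw [hwdef, dotZ_add_right, dotZ_zsmul_right, dotZ_zsmul_right]; ring
        have h2 : dotZ a w = A * dotZ a s - dotZ a s * A := by
          rw [hwdef, dotZ_add_right, dotZ_zsmul_right, dotZ_zsmul_right, ← hA]; ring
        rw [h1, h2, dotZ_comm s a]
        nlinarith [heq]
      have hw0 := dotZ_self_eq_zero hw
      have : A • s = dotZ a s • a := by
        have := congrArg (fun z => z + (dotZ a s) • a) hw0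
        simpa [add_assoc, neg_smul] using this
      exact this
    have hSM' : AddSubgroup.closure S ≤ M := (AddSubgroup.closure_le M).2 hSM
    rw [hgen] at hSM'
    -- every x satisfies A • x = dotZ a x • a, test on basis vectors
    have key : ∀ i j : Fin n, A * (if j = i then (1:ℤ) else 0) = a i * a j := by
      intro i j
      set e : Fin n → ℤ := fun j' => if j' = i then (1:ℤ) else 0 with he
      have hx : e ∈ M := hSM' (AddSubgroup.mem_top _)
      have hx' : A • e = dotZ a e • a := hx
      have hd : dotZ a e = a i := by
        unfold dotZ
        rw [Finset.sum_eq_single i]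
        · simp [he]
        · intro j' _ hj'; simp [he, hj']
        · intro hj'; exact absurd (Finset.mem_univ i) hj'
      rw [hd] at hx'
      have := congrFun hx' j
      simpa [he, smul_eq_mul] using this
    have k1 : a ⟨0, by omega⟩ * a ⟨0, by omega⟩ = A := by
      have := key ⟨0, by omega⟩ ⟨0, by omega⟩
      simpa using this.symm
    have k2 : a ⟨1, by omega⟩ * a ⟨1, by omega⟩ = A := by
      have := key ⟨1, by omega⟩ ⟨1, by omega⟩
      simpa using this.symm
    have k3 : a ⟨0, by omega⟩ * a ⟨1, by omega⟩ = 0 := by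
      have := key ⟨0, by omega⟩ ⟨1, by omega⟩
      simpa [Fin.ext_iff] using this.symm
    nlinarith [hApos, k1, k2, k3]
  -- construct the auxiliary vector h̃
  obtain ⟨b₀, hb₀S, hD⟩ := hb0
  set w : Fin n → ℤ := A • b₀ + (-(dotZ a b₀)) • a with hw
  set D : ℤ := A * dotZ b₀ b₀ - (dotZ a b₀) ^ 2 with hDdef
  have hDne : D ≠ 0 := sub_ne_zero.2 hD
  have hwa : dotZ w a = 0 := by
    rw [hw, dotZ_comb_left, dotZ_comm b₀ a, ← hA]; ring
  have hwb : dotZ w b₀ = D := by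
    rw [hw, dotZ_comb_left, hDdef, dotZ_comm a b₀]; ring
  have hww : dotZ w w = A * D := by
    rw [hw, dotZ_comb_left, dotZ_comm b₀ w, dotZ_comm a w, hwa, hwb]; ring
  have hDpos : 0 < D := by
    have h1 : 0 ≤ A * D := hww ▸ dotZ_nonneg w
    rcases lt_trichotomy D 0 with h' | h' | h'
    · nlinarith
    · exact absurd h' hDne
    · exact h'
  -- the finset of elements with positive w-pairing
  set T : Finset (Fin n → ℤ) := hfin.toFinset.filter (fun s => 0 < dotZ w s) with hT
  have hTne : T.Nonempty := by
    refine ⟨b₀, ?_⟩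
    rw [hT, Finset.mem_filter, Set.Finite.mem_toFinset]
    exact ⟨hb₀S, by rw [hwb]; exact hDpos⟩
  obtain ⟨b, hbT, hbmin⟩ := Finset.exists_min_image T
    (fun s => (1 - (dotZ a s : ℝ) / (A : ℝ)) / (dotZ w s : ℝ)) hTne
  rw [hT, Finset.mem_filter, Set.Finite.mem_toFinset] at hbT
  obtain ⟨hbS, hbpos⟩ := hbT
  have hbne : b ≠ a := by
    intro hcon
    rw [hcon, hwa] at hbpos
    exact lt_irrefl 0 hbpos
  have hba : dotZ a b < A := hstrict b hbS hbne
  have hAr : (0:ℝ) < (A:ℝ) := by exact_mod_cast hApos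
  set t : ℝ := (1 - (dotZ a b : ℝ) / (A : ℝ)) / (dotZ w b : ℝ) with htdef
  have hbr : (0:ℝ) < (dotZ w b : ℝ) := by exact_mod_cast hbpos
  have hgb1 : (dotZ a b : ℝ) / (A : ℝ) < 1 := (div_lt_one hAr).2 (by exact_mod_cast hba)
  have ht : 0 < t := div_pos (by linarith) hbr
  -- define the functionals
  refine ⟨a, b, fun x => (dotZ a x : ℝ) / (A : ℝ) + t * (dotZ w x : ℝ),
    fun x => (dotZ a x : ℝ) / (A : ℝ), 1 - (dotZ a b : ℝ) / (A : ℝ),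
    haF, hbS, ?_, ?_, ?_, ?_, ?_, ?_, ?_, ?_, ?_, ?_⟩
  · intro x y
    dsimp only
    rw [dotZ_add_right, dotZ_add_right]
    push_cast
    ring
  · intro x y
    dsimp only
    rw [dotZ_add_right]
    push_cast
    ring
  · -- f ≤ 1 on S
    intro s hs
    dsimp only
    have hgs : (dotZ a s : ℝ) / (A : ℝ) ≤ 1 := by
      rw [div_le_one hAr]
      exact_mod_cast hle s hs
    rcases le_or_gt (dotZ w s) 0 with h' | h'
    · have : t * (dotZ w s : ℝ) ≤ 0 :=
        mul_nonpos_of_nonneg_of_nonpos ht.le (by exact_mod_cast h')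
      linarith
    · have hsT : s ∈ T := by
        rw [hT, Finset.mem_filter, Set.Finite.mem_toFinset]
        exact ⟨hs, h'⟩
      have hmin := hbmin s hsT
      have hsr : (0:ℝ) < (dotZ w s : ℝ) := by exact_mod_cast h'
      have : t * (dotZ w s : ℝ) ≤ 1 - (dotZ a s : ℝ) / (A : ℝ) := by
        rw [htdef]
        calc (1 - (dotZ a b : ℝ) / (A : ℝ)) / (dotZ w b : ℝ) * (dotZ w s : ℝ)
            ≤ (1 - (dotZ a s : ℝ) / (A : ℝ)) / (dotZ w s : ℝ) * (dotZ w s : ℝ) := by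
              apply mul_le_mul_of_nonneg_right hmin hsr.le
          _ = 1 - (dotZ a s : ℝ) / (A : ℝ) := by
              field_simp
      linarith
  · -- g ≤ 1 on S
    intro s hs
    dsimp only
    rw [div_le_one hAr]
    exact_mod_cast hle s hs
  · -- f a = 1
    dsimp only
    rw [← hA, hwa]
    push_cast
    field_simp
    simp
  · -- f b = 1
    dsimp only
    rw [htdef]
    field_simp
    ring
  · -- g a = 1
    dsimp only
    rw [← hA]
    field_simp
  · -- g b = 1 - δ
    dsimp only
    ring
  · -- 0 < δ
    linarith
  · -- δ ≤ 2
    have hlb : -(A:ℝ) ≤ (dotZ a b : ℝ) := by exact_mod_cast hgelb b hbS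
    have : (-1 : ℝ) ≤ (dotZ a b : ℝ) / (A : ℝ) := by
      rw [le_div_iff₀ hAr]
      linarith
    linarith


lemma aux_add_props {G : Type*} [AddCommGroup G] (φ : G → ℝ)
    (hadd : ∀ x y, φ (x + y) = φ x + φ y) :
    φ 0 = 0 ∧ (∀ x, φ (-x) = -φ x) ∧ ∀ (k : ℕ) (x : G), φ (k • x) = k * φ x := by
  have h0 : φ 0 = 0 := by have := hadd 0 0; simp at this; linarith
  have hneg : ∀ x, φ (-x) = -φ x := by
    intro x
    have := hadd x (-x)
    simp [h0] at this
    linarith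
  refine ⟨h0, hneg, ?_⟩
  intro k
  induction k with
  | zero => intro x; simp [h0]
  | succ m ih =>
      intro x
      rw [succ_nsmul, hadd, ih]
      push_cast
      ring

/-- Every Cayley graph of the free abelian group `ℤⁿ` (`n ≥ 2`) has roundness exactly 1:
for every finite symmetric generating set `Σ` with `0 ∉ Σ`, the word metric `d_Σ` on `ℤⁿ`
has roundness `1`. -/
theorem roundness_spectrum_zn_eq_one (n : ℕ) (hn : 2 ≤ n) (S : Set (Fin n → ℤ))
    (hfin : S.Finite) (hsym : ∀ v ∈ S, -v ∈ S) (h0 : (0 : Fin n → ℤ) ∉ S)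
    (hgen : AddSubgroup.closure S = ⊤) :
    roundness (addWordDist S) = (1 : EReal) := by
  have ddef : ∀ x y : Fin n → ℤ, addWordDist S x y = ((addWordLength S (-x + y) : ℕ) : ℝ) :=
    fun x y => rfl
  have dsym : ∀ x y : Fin n → ℤ, addWordDist S x y = addWordDist S y x := by
    intro x y
    rw [ddef, ddef]
    congr 1
    have e : -x + y = -(-y + x) := by abel
    rw [e, aux_wl_neg hsym hgen]
  have dtri : ∀ x y z : Fin n → ℤ,
      addWordDist S x z ≤ addWordDist S x y + addWordDist S y z := by
    intro x y z
    rw [ddef, ddef, ddef]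
    have e : -x + z = (-x + y) + (-y + z) := by abel
    rw [e]
    exact_mod_cast aux_wl_add_le hsym hgen (-x + y) (-y + z)
  have hset : roundnessSet (addWordDist S) = {1} := by
    apply Set.eq_singleton_iff_unique_mem.2
    constructor
    · -- 1 is in the roundness set: it is the triangle inequality
      refine ⟨le_refl 1, ?_⟩
      intro x00 x01 x10 x11
      simp only [Real.rpow_one]
      have h1 := dtri x00 x01 x11
      have h2 := dtri x00 x10 x11
      have h3 := dtri x01 x00 x10
      have h4 := dtri x01 x11 x10
      rw [dsym x01 x11] at h1 h4
      rw [dsym x01 x00] at h3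
      rw [dsym x10 x11] at h2
      linarith
    · -- no q > 1 is in the roundness set
      rintro q ⟨hq1, H⟩
      by_contra hne
      have hq : 1 < q := lt_of_le_of_ne hq1 (Ne.symm hne)
      obtain ⟨a, b, f, g, δ, haS, hbS, hfadd, hgadd, hf1, hg1, hfa, hfb, hga, hgb, hδ, hδ2⟩ :=
        exists_functionals n hn S hfin hsym h0 hgen
      obtain ⟨hf0, hfneg, hfsmul⟩ := aux_add_props f hfadd
      obtain ⟨hg0, hgneg, hgsmul⟩ := aux_add_props g hgadd
      -- the negated functionals are also bounded by 1 on S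
      have hf1' : ∀ s ∈ S, -f s ≤ 1 := by
        intro s hs
        have := hf1 (-s) (hsym s hs)
        rw [hfneg] at this
        linarith
      have hg1' : ∀ s ∈ S, -g s ≤ 1 := by
        intro s hs
        have := hg1 (-s) (hsym s hs)
        rw [hgneg] at this
        linarith
      have hb0 : b ≠ 0 := fun h => h0 (h ▸ hbS)
      -- choose k large enough
      have hqδ : 0 < q * δ := by positivity
      set c : ℝ := 2 / (q * δ) with hc
      have hcpos : 0 < c := by positivity
      obtain ⟨k, hk⟩ := exists_nat_gt (max 1 (c ^ (1 / (q - 1))))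
      have hq1' : 0 < q - 1 := by linarith
      have hK1 : (1 : ℝ) < (k : ℝ) := lt_of_le_of_lt (le_max_left _ _) hk
      set K : ℝ := (k : ℝ) with hKdef
      have hK0 : 0 < K := by linarith
      have hkq : c < K ^ (q - 1) := by
        calc c = (c ^ (1 / (q - 1))) ^ (q - 1) := by
              rw [← Real.rpow_mul hcpos.le, one_div_mul_cancel (ne_of_gt hq1'), Real.rpow_one]
          _ < K ^ (q - 1) := by
              apply Real.rpow_lt_rpow (Real.rpow_nonneg hcpos.le _) _ hq1'
              exact lt_of_le_of_lt (le_max_right _ _) hk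
      -- word length computations
      have len_ka : ((addWordLength S (k • a) : ℕ) : ℝ) = K := by
        have hub : addWordLength S (k • a) ≤ k := by
          have h' := aux_wl_le (S := S) (k • a) (List.replicate k a)
            (fun x hx => by rw [List.eq_of_mem_replicate hx]; exact haS)
            (by rw [List.sum_replicate])
          simpa using h'
        have hlb : (k : ℝ) ≤ ((addWordLength S (k • a) : ℕ) : ℝ) := by
          have := aux_phi_le hsym hgen f hfadd hf1 (k • a)
          rw [hfsmul, hfa, mul_one] at this
          exact this
        have hub' : ((addWordLength S (k • a) : ℕ) : ℝ) ≤ (k : ℝ) := by exact_mod_cast hub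
        linarith
      have len_kab : ((addWordLength S (k • a + b) : ℕ) : ℝ) = K + 1 := by
        have hub : addWordLength S (k • a + b) ≤ k + 1 := by
          have h' := aux_wl_le (S := S) (k • a + b) (List.replicate k a ++ [b])
            (by intro x hx
                rcases List.mem_append.1 hx with h | h
                · rw [List.eq_of_mem_replicate h]; exact haS
                · simp at h; rw [h]; exact hbS)
            (by simp [List.sum_replicate])
          simpa using h'
        have hlb : (k : ℝ) + 1 ≤ ((addWordLength S (k • a + b) : ℕ) : ℝ) := by
          have := aux_phi_le hsym hgen f hfadd hf1 (k • a + b)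
          rw [hfadd, hfsmul, hfa, hfb, mul_one] at this
          linarith
        have hub' : ((addWordLength S (k • a + b) : ℕ) : ℝ) ≤ (k : ℝ) + 1 := by
          exact_mod_cast hub
        linarith
      have len_b : ((addWordLength S b : ℕ) : ℝ) = 1 := by
        have hub : addWordLength S b ≤ 1 := by
          apply aux_wl_le (S := S) _ [b]
          · intro x hx; simp at hx; rw [hx]; exact hbS
          · simp
        have hlb : 1 ≤ addWordLength S b := aux_wl_pos hsym hgen b hb0
        have : addWordLength S b = 1 := le_antisymm hub hlb
        rw [this]; norm_num
      have len_nb : ((addWordLength S (-b) : ℕ) : ℝ) = 1 := by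
        rw [aux_wl_neg hsym hgen]; exact len_b
      have len_nka : ((addWordLength S (-(k • a)) : ℕ) : ℝ) = K := by
        rw [aux_wl_neg hsym hgen]; exact len_ka
      have len_diag : K - 1 + δ ≤ ((addWordLength S (-(k • a) + b) : ℕ) : ℝ) := by
        have key := aux_phi_le hsym hgen (fun x => -(g x))
          (by intro x y
              show -(g (x + y)) = -(g x) + -(g y)
              rw [hgadd]; ring) hg1' (-(k • a) + b)
        have key' : -(g (-(k • a) + b)) ≤ ((addWordLength S (-(k • a) + b) : ℕ) : ℝ) := key
        rw [hgadd, hgneg, hgsmul, hga, hgb, mul_one] at key'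
        linarith
      -- apply the roundness inequality to the chosen quadruple
      have Hq := H 0 (k • a) b (k • a + b)
      rw [ddef 0 (k • a + b), ddef (k • a) b, ddef 0 (k • a), ddef 0 b,
        ddef (k • a + b) (k • a), ddef (k • a + b) b] at Hq
      have e1 : -(0 : Fin n → ℤ) + (k • a + b) = k • a + b := by abel
      have e2 : -(k • a) + b = -(k • a) + b := rfl
      have e3 : -(0 : Fin n → ℤ) + k • a = k • a := by abel
      have e4 : -(0 : Fin n → ℤ) + b = b := by abel
      have e5 : -(k • a + b) + k • a = -b := by abel
      have e6 : -(k • a + b) + b = -(k • a) := by abel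
      rw [e1, e3, e4, e5, e6] at Hq
      rw [len_kab, len_ka, len_b, len_nb, len_nka] at Hq
      rw [Real.one_rpow] at Hq
      -- lower bound for the second diagonal
      have hKd : 0 ≤ K - 1 + δ := by linarith
      have hdiag : (K - 1 + δ) ^ q ≤ ((addWordLength S (-(k • a) + b) : ℕ) : ℝ) ^ q :=
        Real.rpow_le_rpow hKd len_diag (by linarith)
      -- Bernoulli estimates
      have hKne : K ≠ 0 := ne_of_gt hK0
      have hKq1 : K ^ (q - 1) = K ^ q / K := Real.rpow_sub_one hKne q
      have hB1 : K ^ q + q * K ^ (q - 1) ≤ (K + 1) ^ q := by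
        have hber := one_add_mul_self_le_rpow_one_add (s := 1 / K) (((by norm_num : (-1:ℝ) ≤ 0)).trans (by positivity)) hq1
        have hmul : K ^ q * (1 + q * (1 / K)) ≤ K ^ q * (1 + 1 / K) ^ q :=
          mul_le_mul_of_nonneg_left hber (Real.rpow_nonneg hK0.le q)
        have hprod : K ^ q * (1 + 1 / K) ^ q = (K + 1) ^ q := by
          rw [← Real.mul_rpow hK0.le (by positivity)]
          congr 1
          field_simp
        rw [hprod] at hmul
        calc K ^ q + q * K ^ (q - 1) = K ^ q * (1 + q * (1 / K)) := by
              rw [hKq1]; field_simp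
          _ ≤ (K + 1) ^ q := hmul
      have hB2 : K ^ q + q * (δ - 1) * K ^ (q - 1) ≤ (K - 1 + δ) ^ q := by
        have hs1 : (-1 : ℝ) ≤ (δ - 1) / K := by
          rw [le_div_iff₀ hK0]
          nlinarith
        have hs0 : 0 ≤ 1 + (δ - 1) / K := by linarith
        have hber := one_add_mul_self_le_rpow_one_add hs1 hq1
        have hmul : K ^ q * (1 + q * ((δ - 1) / K)) ≤ K ^ q * (1 + (δ - 1) / K) ^ q :=
          mul_le_mul_of_nonneg_left hber (Real.rpow_nonneg hK0.le q)
        have hprod : K ^ q * (1 + (δ - 1) / K) ^ q = (K - 1 + δ) ^ q := by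
          rw [← Real.mul_rpow hK0.le hs0]
          congr 1
          field_simp
          ring
        rw [hprod] at hmul
        calc K ^ q + q * (δ - 1) * K ^ (q - 1) = K ^ q * (1 + q * ((δ - 1) / K)) := by
              rw [hKq1]; field_simp
          _ ≤ (K - 1 + δ) ^ q := hmul
      -- combine everything
      have hfinal : q * δ * K ^ (q - 1) ≤ 2 := by linarith [Hq, hdiag, hB1, hB2]
      have hcontra : 2 < q * δ * K ^ (q - 1) := by
        have := (div_lt_iff₀ hqδ).1 hkq
        linarith [this]
      linarith
  rw [roundness, hset, Set.image_singleton, sSup_singleton]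
  exact EReal.coe_one
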